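/- arXiv:1702.01476 — 3 statements merged into one kernel-verified Lean document; each statement's English description precedes it below -/
import Mathlib

section
/- Let n ≥ 1 and let J be the 2n×2n real block matrix [[0, -I_n],[I_n, 0]] (so J² = -I). For every g in the real symplectic group Sp(2n,ℝ) = {g : gᵀ J g = J}, the matrix C_g := (1/2)(g − J·g·J) commutes with J and is invertible. -/
open Matrix

/-- For `g` in the real symplectic group `Sp(2n,ℝ)` (i.e. `gᵀ J g = J` where
`J = [[0,-I],[I,0]]`), the matrix `C_g = (1/2)(g - J g J)` commutes with `J`
and is invertible. -/
theorem symplectic_Cg_commutes_and_invertible (n : ℕ) (hn : 1 ≤ n)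
    (g : Matrix (Fin n ⊕ Fin n) (Fin n ⊕ Fin n) ℝ)
    (hg : gᵀ * Matrix.J (Fin n) ℝ * g = Matrix.J (Fin n) ℝ) :
    ((1 / 2 : ℝ) • (g - Matrix.J (Fin n) ℝ * g * Matrix.J (Fin n) ℝ)) * Matrix.J (Fin n) ℝ
        = Matrix.J (Fin n) ℝ *
          ((1 / 2 : ℝ) • (g - Matrix.J (Fin n) ℝ * g * Matrix.J (Fin n) ℝ)) ∧
      IsUnit ((1 / 2 : ℝ) • (g - Matrix.J (Fin n) ℝ * g * Matrix.J (Fin n) ℝ)) := by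
  set J := Matrix.J (Fin n) ℝ with hJ
  have hJJ : J * J = -1 := Matrix.J_squared _ _
  have hJT : Jᵀ = -J := Matrix.J_transpose _ _
  set C : Matrix (Fin n ⊕ Fin n) (Fin n ⊕ Fin n) ℝ := (1 / 2 : ℝ) • (g - J * g * J) with hC
  set D : Matrix (Fin n ⊕ Fin n) (Fin n ⊕ Fin n) ℝ := (1 / 2 : ℝ) • (g + J * g * J) with hD
  have hcomm : C * J = J * C := by
    rw [hC, smul_mul_assoc, mul_smul_comm]
    congr 1
    have h1 : (g - J * g * J) * J = g * J + J * g := by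
      rw [sub_mul, mul_assoc, mul_assoc, hJJ]
      noncomm_ring
    have h2 : J * (g - J * g * J) = J * g + g * J := by
      rw [mul_sub, ← mul_assoc, ← mul_assoc, hJJ]
      noncomm_ring
    rw [h1, h2, add_comm]
  refine ⟨hcomm, ?_⟩
  -- key identity: Cᵀ * C - Dᵀ * D = 1
  have hexp : (g - J * g * J)ᵀ * (g - J * g * J) - (g + J * g * J)ᵀ * (g + J * g * J)
      = -((gᵀ * J * g) * J) - (gᵀ * J * g) * J - J * (gᵀ * J * g) - J * (gᵀ * J * g) := by
    simp only [transpose_sub, transpose_add, transpose_mul, hJT]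
    noncomm_ring
  rw [hg, hJJ] at hexp
  have hexp4 : (g - J * g * J)ᵀ * (g - J * g * J) - (g + J * g * J)ᵀ * (g + J * g * J)
      = (4 : ℝ) • (1 : Matrix (Fin n ⊕ Fin n) (Fin n ⊕ Fin n) ℝ) := by
    rw [hexp]
    module
  have key : Cᵀ * C = 1 + Dᵀ * D := by
    have h := eq_add_of_sub_eq hexp4
    rw [hC, hD, transpose_smul, transpose_smul, smul_mul_assoc, mul_smul_comm,
      smul_mul_assoc, mul_smul_comm, h]
    module
  -- 1 + Dᵀ D is positive definite
  have hposD : (Dᵀ * D).PosSemidef := by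
    have := Matrix.posSemidef_conjTranspose_mul_self D
    rwa [conjTranspose] at this
  have hpos : (1 + Dᵀ * D).PosDef := Matrix.PosDef.add_posSemidef Matrix.PosDef.one hposD
  have hdet : det Cᵀ * det C ≠ 0 := by
    rw [← det_mul, key]
    exact hpos.det_pos.ne'
  have : det C ≠ 0 := fun h => hdet (by rw [h, mul_zero])
  exact (Matrix.isUnit_iff_isUnit_det C).mpr this.isUnit
end

section
/- Let n ≥ 1 and let J be the 2n×2n real block matrix [[0, -I_n],[I_n, 0]]. Every compact subgroup G of the real symplectic group Sp(2n,ℝ) = {g : gᵀ J g = J} (with its topology as a matrix group) is conjugate within Sp(2n,ℝ) to a subgroup of the unitary group Sp(2n,ℝ) ∩ O(2n): there exists S ∈ Sp(2n,ℝ) such that S·g·S⁻¹ is orthogonal for every g ∈ G. -/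
set_option linter.unusedSectionVars false
set_option maxHeartbeats 1000000

open Matrix MeasureTheory
open scoped MatrixOrder

namespace WeylTrick


variable {ι : Type*} [Fintype ι] [DecidableEq ι]

lemma real_conjTranspose (A : Matrix ι ι ℝ) : Aᴴ = Aᵀ := by
  ext i j; simp [conjTranspose_apply]

lemma isHermitian_iff_symm {A : Matrix ι ι ℝ} : A.IsHermitian ↔ Aᵀ = A := by
  rw [Matrix.IsHermitian, real_conjTranspose]

lemma posDef_iff_real {A : Matrix ι ι ℝ} :
    A.PosDef ↔ Aᵀ = A ∧ ∀ x : ι → ℝ, x ≠ 0 → 0 < x ⬝ᵥ A.mulVec x := by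
  constructor
  · rintro ⟨h1, h2⟩
    exact ⟨isHermitian_iff_symm.mp h1, fun x hx => by simpa using (posDef_iff_dotProduct_mulVec.mp ⟨h1, h2⟩).2 hx⟩
  · rintro ⟨h1, h2⟩
    exact posDef_iff_dotProduct_mulVec.mpr ⟨isHermitian_iff_symm.mpr h1, fun x hx => by simpa using h2 x hx⟩

lemma mulVec_ne_zero {B : Matrix ι ι ℝ} (hB : IsUnit B.det) {x : ι → ℝ} (hx : x ≠ 0) :
    B.mulVec x ≠ 0 := by
  intro h
  apply hx
  have := congrArg (fun v => B⁻¹.mulVec v) h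
  simpa [Matrix.mulVec_mulVec, Matrix.nonsing_inv_mul B hB] using this

lemma posDef_congr {A B : Matrix ι ι ℝ} (hA : A.PosDef) (hB : IsUnit B.det) :
    (Bᵀ * A * B).PosDef := by
  obtain ⟨h1, h2⟩ := posDef_iff_real.mp hA
  refine posDef_iff_real.mpr ⟨?_, ?_⟩
  · simp [Matrix.transpose_mul, Matrix.mul_assoc, h1]
  · intro x hx
    have key : x ⬝ᵥ (Bᵀ * A * B).mulVec x = (B.mulVec x) ⬝ᵥ A.mulVec (B.mulVec x) := by
      rw [← Matrix.mulVec_mulVec, ← Matrix.mulVec_mulVec, Matrix.dotProduct_mulVec x Bᵀ,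
        Matrix.vecMul_transpose]
    rw [key]
    exact h2 _ (mulVec_ne_zero hB hx)

lemma posDef_of_posSemidef_isUnit {A : Matrix ι ι ℝ} (h : A.PosSemidef) (hd : IsUnit A.det) :
    A.PosDef := by
  refine posDef_iff_dotProduct_mulVec.mpr ⟨h.1, fun x hx => ?_⟩
  have h0 := h.dotProduct_mulVec_nonneg x
  rcases lt_or_eq_of_le h0 with h' | h'
  · simpa using h'
  · exfalso
    apply mulVec_ne_zero hd hx
    have := (h.dotProduct_mulVec_zero_iff x).mp ?_
    · exact this
    · simpa using h'.symm

/-- the positive definite square root -/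
noncomputable def psqrt {A : Matrix ι ι ℝ} (hA : A.PosDef) : Matrix ι ι ℝ :=
  CFC.sqrt A

lemma psqrt_mul_self {A : Matrix ι ι ℝ} (hA : A.PosDef) : psqrt hA * psqrt hA = A :=
  CFC.sqrt_mul_sqrt_self A hA.posSemidef.nonneg

lemma psqrt_posSemidef {A : Matrix ι ι ℝ} (hA : A.PosDef) : (psqrt hA).PosSemidef :=
  (CFC.sqrt_nonneg A).posSemidef

lemma psqrt_posDef {A : Matrix ι ι ℝ} (hA : A.PosDef) : (psqrt hA).PosDef := by
  refine posDef_of_posSemidef_isUnit (psqrt_posSemidef hA) ?_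
  have : (psqrt hA).det * (psqrt hA).det = A.det := by
    rw [← Matrix.det_mul, psqrt_mul_self]
  have hd : A.det ≠ 0 := ne_of_gt hA.det_pos
  refine isUnit_iff_ne_zero.mpr fun h0 => hd ?_
  rw [← this, h0, mul_zero]

lemma psqrt_symm {A : Matrix ι ι ℝ} (hA : A.PosDef) : (psqrt hA)ᵀ = psqrt hA :=
  isHermitian_iff_symm.mp (psqrt_posSemidef hA).1

lemma riccati_unique {A X Y : Matrix ι ι ℝ} (hA : A.PosDef) (hX : X.PosDef) (hY : Y.PosDef)
    (h : X * A⁻¹ * X = Y * A⁻¹ * Y) : X = Y := by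
  set R := psqrt hA.inv with hR
  have hRR : R * R = A⁻¹ := psqrt_mul_self hA.inv
  have hRd : IsUnit R.det := isUnit_iff_ne_zero.mpr (psqrt_posDef hA.inv).det_pos.ne'
  have hRsymm : Rᵀ = R := psqrt_symm hA.inv
  have hXs : (R * X * R).PosSemidef := by
    have := posDef_congr hX hRd
    rw [hRsymm] at this
    exact this.posSemidef
  have hYs : (R * Y * R).PosSemidef := by
    have := posDef_congr hY hRd
    rw [hRsymm] at this
    exact this.posSemidef
  have hsq : (R * X * R) ^ 2 = (R * Y * R) ^ 2 := by
    simp only [pow_two]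
    calc R * X * R * (R * X * R) = R * (X * (R * R) * X) * R := by
          simp only [Matrix.mul_assoc]
        _ = R * (X * A⁻¹ * X) * R := by rw [hRR, Matrix.mul_assoc]
        _ = R * (Y * A⁻¹ * Y) * R := by rw [h]
        _ = R * (Y * (R * R) * Y) * R := by rw [hRR, Matrix.mul_assoc]
        _ = R * Y * R * (R * Y * R) := by simp only [Matrix.mul_assoc]
  have heq := (CFC.sq_eq_sq_iff _ _ hXs.nonneg hYs.nonneg).mp hsq
  have h2 := congrArg (fun Z => R⁻¹ * Z * R⁻¹) heq
  simp only [Matrix.mul_assoc, Matrix.nonsing_inv_mul R hRd, Matrix.mul_nonsing_inv R hRd,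
    Matrix.mul_one, Matrix.one_mul] at h2
  rw [← Matrix.mul_assoc, ← Matrix.mul_assoc, Matrix.nonsing_inv_mul R hRd,
    Matrix.one_mul, Matrix.one_mul] at h2
  exact h2

lemma riccati_exists {A B : Matrix ι ι ℝ} (hA : A.PosDef) (hB : B.PosDef) :
    ∃ X : Matrix ι ι ℝ, X.PosDef ∧ X * A⁻¹ * X = B := by
  set R := psqrt hA with hRdef
  have hRR : R * R = A := psqrt_mul_self hA
  have hRpd : R.PosDef := psqrt_posDef hA
  have hRd : IsUnit R.det := isUnit_iff_ne_zero.mpr hRpd.det_pos.ne'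
  have hRsymm : Rᵀ = R := psqrt_symm hA
  have hRid : IsUnit R⁻¹.det := isUnit_iff_ne_zero.mpr hRpd.inv.det_pos.ne'
  have hRisymm : (R⁻¹)ᵀ = R⁻¹ := by rw [Matrix.transpose_nonsing_inv, hRsymm]
  have hM : (R⁻¹ * B * R⁻¹).PosDef := by
    have := posDef_congr hB hRid
    rwa [hRisymm] at this
  refine ⟨R * psqrt hM * R, ?_, ?_⟩
  · have := posDef_congr (psqrt_posDef hM) hRd
    rwa [hRsymm] at this
  · have hAinv : A⁻¹ = R⁻¹ * R⁻¹ := by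
      rw [← hRR, Matrix.mul_inv_rev]
    rw [hAinv]
    calc R * psqrt hM * R * (R⁻¹ * R⁻¹) * (R * psqrt hM * R)
        = R * psqrt hM * ((R * R⁻¹) * (R⁻¹ * R)) * (psqrt hM * R) := by
          simp only [Matrix.mul_assoc]
      _ = R * (psqrt hM * psqrt hM) * R := by
          rw [Matrix.mul_nonsing_inv R hRd, Matrix.nonsing_inv_mul R hRd]
          simp only [Matrix.mul_one, Matrix.one_mul, Matrix.mul_assoc]
      _ = R * (R⁻¹ * B * R⁻¹) * R := by rw [psqrt_mul_self hM]
      _ = (R * R⁻¹) * B * (R⁻¹ * R) := by simp only [Matrix.mul_assoc]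
      _ = B := by
          rw [Matrix.mul_nonsing_inv R hRd, Matrix.nonsing_inv_mul R hRd,
            Matrix.one_mul, Matrix.mul_one]

theorem exists_invariant_posDef (G : Set (Matrix ι ι ℝ)) (hcpt : IsCompact G)
    (hone : (1 : Matrix ι ι ℝ) ∈ G)
    (hmul : ∀ g ∈ G, ∀ g' ∈ G, g * g' ∈ G)
    (hinv : ∀ g ∈ G, g⁻¹ ∈ G)
    (hdet : ∀ g ∈ G, IsUnit g.det) :
    ∃ P : Matrix ι ι ℝ, P.PosDef ∧ ∀ g ∈ G, g * P * gᵀ = P := by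
  haveI : CompactSpace ↥G := isCompact_iff_compactSpace.mp hcpt
  haveI : Nonempty ↥G := ⟨⟨1, hone⟩⟩
  letI : Group ↥G :=
    { one := ⟨1, hone⟩
      mul := fun a b => ⟨a.1 * b.1, hmul _ a.2 _ b.2⟩
      inv := fun a => ⟨(a.1)⁻¹, hinv _ a.2⟩
      mul_assoc := fun a b c => Subtype.ext (mul_assoc a.1 b.1 c.1)
      one_mul := fun a => Subtype.ext (one_mul a.1)
      mul_one := fun a => Subtype.ext (mul_one a.1)
      inv_mul_cancel := fun a => Subtype.ext (Matrix.nonsing_inv_mul a.1 (hdet _ a.2)) }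
  have hmul_val : ∀ a b : ↥G, ((a * b : ↥G) : Matrix ι ι ℝ) = (a : Matrix ι ι ℝ) * b := by
    intro a b; rfl
  letI : IsTopologicalGroup ↥G :=
    { continuous_mul := by
        apply Continuous.subtype_mk
        exact ((continuous_subtype_val.comp continuous_fst).matrix_mul
          (continuous_subtype_val.comp continuous_snd))
      continuous_inv := by
        apply Continuous.subtype_mk
        have hval : (fun a : ↥G => (a.1)⁻¹) =
            fun a : ↥G => (Ring.inverse (a.1.det)) • a.1.adjugate := by
          funext a
          rw [Matrix.inv_def]
        rw [hval]
        simp only [Ring.inverse_eq_inv']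
        exact ((continuous_subtype_val.matrix_det).inv₀
          (fun a => (hdet _ a.2).ne_zero)).smul
          continuous_subtype_val.matrix_adjugate }
  letI : MeasurableSpace ↥G := borel ↥G
  haveI : BorelSpace ↥G := ⟨rfl⟩
  let K0 : TopologicalSpace.PositiveCompacts ↥G :=
    ⟨⟨Set.univ, isCompact_univ⟩, by rw [interior_univ]; exact Set.univ_nonempty⟩
  set μ : Measure ↥G := Measure.haarMeasure K0 with hμ
  haveI : IsFiniteMeasure μ := by
    constructor
    rw [show (Set.univ : Set ↥G) = (K0 : Set ↥G) from rfl, Measure.haarMeasure_self]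
    exact ENNReal.one_lt_top
  -- the integrand
  set F : ↥G → Matrix ι ι ℝ := fun h => (h : Matrix ι ι ℝ) * (h : Matrix ι ι ℝ)ᵀ with hF
  have hFcont : Continuous F :=
    continuous_subtype_val.matrix_mul continuous_subtype_val.matrix_transpose
  have hFc : ∀ i j, Continuous (fun h : ↥G => F h i j) := by
    intro i j
    exact (continuous_apply j).comp ((continuous_apply i).comp hFcont)
  have hFi : ∀ i j, Integrable (fun h : ↥G => F h i j) μ := by
    intro i j
    exact (hFc i j).integrable_of_hasCompactSupport (HasCompactSupport.of_compactSpace _)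
  set P : Matrix ι ι ℝ := Matrix.of (fun i j => ∫ h, F h i j ∂μ) with hP
  -- pushing constant matrices through the integral
  have key : ∀ (A B : Matrix ι ι ℝ) (i j : ι),
      (A * P * B) i j = ∫ h, (A * F h * B) i j ∂μ := by
    intro A B i j
    have expand : ∀ (M : Matrix ι ι ℝ), (A * M * B) i j
        = ∑ l, ∑ k, A i k * M k l * B l j := by
      intro M
      simp only [Matrix.mul_apply, Finset.sum_mul]
    rw [expand]
    have : ∀ l k, A i k * P k l * B l j = ∫ h, A i k * F h k l * B l j ∂μ := by
      intro l k
      have e : ∀ h : ↥G, A i k * F h k l * B l j = (A i k * B l j) * F h k l :=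
        fun h => by ring
      rw [integral_congr_ae (Filter.Eventually.of_forall e), integral_const_mul]
      have hPkl : P k l = ∫ h, F h k l ∂μ := rfl
      rw [hPkl]; ring
    calc ∑ l, ∑ k, A i k * P k l * B l j
        = ∑ l, ∑ k, ∫ h, A i k * F h k l * B l j ∂μ := by
          refine Finset.sum_congr rfl fun l _ => Finset.sum_congr rfl fun k _ => this l k
      _ = ∫ h, ∑ l, ∑ k, A i k * F h k l * B l j ∂μ := by
          rw [integral_finset_sum]
          · exact Finset.sum_congr rfl fun l _ => (integral_finset_sum _ (fun k _ =>
              (((hFi k l).const_mul _).mul_const _))).symm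
          · intro l _
            exact integrable_finset_sum _ fun k _ => (((hFi k l).const_mul _).mul_const _)
      _ = ∫ h, (A * F h * B) i j ∂μ :=
          integral_congr_ae (Filter.Eventually.of_forall fun h => (expand (F h)).symm)
  -- quadratic form
  have hquad : ∀ x : ι → ℝ, x ⬝ᵥ P.mulVec x = ∫ h, x ⬝ᵥ (F h).mulVec x ∂μ := by
    intro x
    have expand : ∀ (M : Matrix ι ι ℝ), x ⬝ᵥ M.mulVec x
        = ∑ i, ∑ j, x i * M i j * x j := by
      intro M
      simp only [dotProduct, Matrix.mulVec, Finset.mul_sum]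
      exact Finset.sum_congr rfl fun i _ => Finset.sum_congr rfl fun j _ => by ring
    rw [expand]
    have : ∀ i j, x i * P i j * x j = ∫ h, x i * F h i j * x j ∂μ := by
      intro i j
      have e : ∀ h : ↥G, x i * F h i j * x j = (x i * x j) * F h i j :=
        fun h => by ring
      rw [integral_congr_ae (Filter.Eventually.of_forall e), integral_const_mul]
      have hPij : P i j = ∫ h, F h i j ∂μ := rfl
      rw [hPij]; ring
    calc ∑ i, ∑ j, x i * P i j * x j
        = ∑ i, ∑ j, ∫ h, x i * F h i j * x j ∂μ := by
          refine Finset.sum_congr rfl fun i _ => Finset.sum_congr rfl fun j _ => this i j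
      _ = ∫ h, ∑ i, ∑ j, x i * F h i j * x j ∂μ := by
          rw [integral_finset_sum]
          · exact Finset.sum_congr rfl fun i _ => (integral_finset_sum _ (fun j _ =>
              (((hFi i j).const_mul _).mul_const _))).symm
          · intro i _
            exact integrable_finset_sum _ fun j _ => (((hFi i j).const_mul _).mul_const _)
      _ = ∫ h, x ⬝ᵥ (F h).mulVec x ∂μ :=
          integral_congr_ae (Filter.Eventually.of_forall fun h => (expand (F h)).symm)
  refine ⟨P, ?_, ?_⟩
  · -- positive definiteness
    rw [posDef_iff_real]
    constructor
    · ext i j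
      show P j i = P i j
      have : ∀ h : ↥G, F h j i = F h i j := by
        intro h
        have : (F h)ᵀ = F h := by
          rw [hF]
          simp only [Matrix.transpose_mul, Matrix.transpose_transpose]
        exact congrFun (congrFun this i) j
      show (∫ h, F h j i ∂μ) = ∫ h, F h i j ∂μ
      exact integral_congr_ae (Filter.Eventually.of_forall this)
    · intro x hx
      rw [hquad x]
      set f : ↥G → ℝ := fun h => x ⬝ᵥ (F h).mulVec x with hf
      have hfval : ∀ h, f h = ((h : Matrix ι ι ℝ)ᵀ.mulVec x) ⬝ᵥ ((h : Matrix ι ι ℝ)ᵀ.mulVec x) := by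
        intro h
        show x ⬝ᵥ ((h : Matrix ι ι ℝ) * (h : Matrix ι ι ℝ)ᵀ).mulVec x = _
        rw [← Matrix.mulVec_mulVec, Matrix.dotProduct_mulVec, ← Matrix.mulVec_transpose]
      have hfnn : 0 ≤ f := by
        intro h
        rw [hfval h]
        simp only [dotProduct]
        exact Finset.sum_nonneg fun i _ => mul_self_nonneg _
      have hfcont : Continuous f :=
        continuous_const.dotProduct (hFcont.matrix_mulVec continuous_const)
      have hfint : Integrable f μ :=
        hfcont.integrable_of_hasCompactSupport (HasCompactSupport.of_compactSpace _)
      rw [integral_pos_iff_support_of_nonneg hfnn hfint]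
      have hopen : IsOpen (Function.support f) := by
        have : Function.support f = f ⁻¹' {0}ᶜ := by
          ext h; simp [Function.mem_support]
        rw [this]
        exact (isOpen_compl_iff.mpr isClosed_singleton).preimage hfcont
      have h1mem : (1 : ↥G) ∈ Function.support f := by
        rw [Function.mem_support, hfval]
        show ((1 : Matrix ι ι ℝ)ᵀ.mulVec x) ⬝ᵥ ((1 : Matrix ι ι ℝ)ᵀ.mulVec x) ≠ 0
        rw [Matrix.transpose_one, Matrix.one_mulVec]
        rw [Ne, dotProduct_self_eq_zero]
        exact hx
      exact hopen.measure_pos μ ⟨1, h1mem⟩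
  · -- invariance
    intro g hg
    ext i j
    rw [key g gᵀ i j]
    have step : ∀ h : ↥G, (g * F h * gᵀ) i j = F ((⟨g, hg⟩ : ↥G) * h) i j := by
      intro h
      have : g * F h * gᵀ = F ((⟨g, hg⟩ : ↥G) * h) := by
        rw [hF]
        show g * ((h : Matrix ι ι ℝ) * (h : Matrix ι ι ℝ)ᵀ) * gᵀ
          = (g * (h : Matrix ι ι ℝ)) * (g * (h : Matrix ι ι ℝ))ᵀ
        rw [Matrix.transpose_mul]
        simp only [Matrix.mul_assoc]
      rw [this]
    rw [integral_congr_ae (Filter.Eventually.of_forall step)]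
    exact integral_mul_left_eq_self (μ := μ) (fun h : ↥G => F h i j) (⟨g, hg⟩ : ↥G)

variable {l : Type*} [Fintype l] [DecidableEq l]

theorem exists_symplectic_conj (G : Set (Matrix (l ⊕ l) (l ⊕ l) ℝ))
    (hsp : ∀ g ∈ G, gᵀ * Matrix.J l ℝ * g = Matrix.J l ℝ)
    (hdet : ∀ g ∈ G, IsUnit g.det)
    (Q : Matrix (l ⊕ l) (l ⊕ l) ℝ) (hQ : Q.PosDef)
    (hQG : ∀ g ∈ G, gᵀ * Q * g = Q) :
    ∃ S : Matrix (l ⊕ l) (l ⊕ l) ℝ,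
      Sᵀ * Matrix.J l ℝ * S = Matrix.J l ℝ ∧
      ∀ g ∈ G, (S * g * S⁻¹)ᵀ * (S * g * S⁻¹) = 1 := by
  set Jm : Matrix (l ⊕ l) (l ⊕ l) ℝ := Matrix.J l ℝ with hJm
  have hJsq : Jm * Jm = -1 := Matrix.J_squared l ℝ
  have hJT : Jmᵀ = -Jm := Matrix.J_transpose l ℝ
  have hJd : IsUnit Jm.det := Matrix.isUnit_det_J l ℝ
  have hJJT : Jm * Jmᵀ = 1 := by rw [hJT, Matrix.mul_neg, hJsq, neg_neg]
  have hQi : Q⁻¹.PosDef := hQ.inv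
  have hTQ : (Jmᵀ * Q⁻¹ * Jm).PosDef := posDef_congr hQi hJd
  obtain ⟨X, hX, hXeq⟩ := riccati_exists hQ hTQ
  have hXd : IsUnit X.det := isUnit_iff_ne_zero.mpr hX.det_pos.ne'
  have hXsymm : Xᵀ = X := isHermitian_iff_symm.mp hX.1
  -- invariance of X
  have hXG : ∀ g ∈ G, gᵀ * X * g = X := by
    intro g hg
    have hgd := hdet g hg
    have hgtd : IsUnit gᵀ.det := by rwa [Matrix.det_transpose]
    have hQg := hQG g hg
    have hQ2 : g⁻¹ * (Q⁻¹ * (gᵀ)⁻¹) = Q⁻¹ := by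
      conv_rhs => rw [← hQg]
      rw [Matrix.mul_inv_rev, Matrix.mul_inv_rev]
    have hQinv : g * Q⁻¹ * gᵀ = Q⁻¹ := by
      calc g * Q⁻¹ * gᵀ
          = g * (g⁻¹ * (Q⁻¹ * (gᵀ)⁻¹)) * gᵀ := by
            rw [hQ2]
        _ = (g * g⁻¹) * Q⁻¹ * ((gᵀ)⁻¹ * gᵀ) := by simp only [Matrix.mul_assoc]
        _ = Q⁻¹ := by
            rw [Matrix.mul_nonsing_inv g hgd, Matrix.nonsing_inv_mul gᵀ hgtd,
              Matrix.one_mul, Matrix.mul_one]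
    have hJg : Jm * g = (gᵀ)⁻¹ * Jm := by
      calc Jm * g = ((gᵀ)⁻¹ * gᵀ) * (Jm * g) := by
            rw [Matrix.nonsing_inv_mul gᵀ hgtd, Matrix.one_mul]
        _ = (gᵀ)⁻¹ * (gᵀ * Jm * g) := by simp only [Matrix.mul_assoc]
        _ = (gᵀ)⁻¹ * Jm := by rw [hsp g hg]
    have hgJ' : gᵀ * Jm = Jm * g⁻¹ := by
      calc gᵀ * Jm = gᵀ * Jm * (g * g⁻¹) := by
            rw [Matrix.mul_nonsing_inv g hgd, Matrix.mul_one]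
        _ = gᵀ * (Jm * g) * g⁻¹ := by simp only [Matrix.mul_assoc]
        _ = gᵀ * ((gᵀ)⁻¹ * Jm) * g⁻¹ := by rw [hJg]
        _ = (gᵀ * (gᵀ)⁻¹) * Jm * g⁻¹ := by simp only [Matrix.mul_assoc]
        _ = Jm * g⁻¹ := by rw [Matrix.mul_nonsing_inv gᵀ hgtd, Matrix.one_mul]
    have hgJ : gᵀ * Jmᵀ = Jmᵀ * g⁻¹ := by
      rw [hJT, Matrix.mul_neg, Matrix.neg_mul, hgJ']
    have hTQg : gᵀ * (Jmᵀ * Q⁻¹ * Jm) * g = Jmᵀ * Q⁻¹ * Jm := by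
      calc gᵀ * (Jmᵀ * Q⁻¹ * Jm) * g
          = (gᵀ * Jmᵀ) * Q⁻¹ * (Jm * g) := by simp only [Matrix.mul_assoc]
        _ = (Jmᵀ * g⁻¹) * Q⁻¹ * ((gᵀ)⁻¹ * Jm) := by rw [hgJ, hJg]
        _ = Jmᵀ * (g⁻¹ * (Q⁻¹ * (gᵀ)⁻¹)) * Jm := by simp only [Matrix.mul_assoc]
        _ = Jmᵀ * Q⁻¹ * Jm := by rw [hQ2]
    have hY : (gᵀ * X * g).PosDef := by
      have := posDef_congr hX hgd
      simpa using this
    refine riccati_unique hQ hY hX ?_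
    calc gᵀ * X * g * Q⁻¹ * (gᵀ * X * g)
        = gᵀ * X * (g * Q⁻¹ * gᵀ) * X * g := by simp only [Matrix.mul_assoc]
      _ = gᵀ * X * Q⁻¹ * X * g := by rw [hQinv]
      _ = gᵀ * (X * Q⁻¹ * X) * g := by simp only [Matrix.mul_assoc]
      _ = gᵀ * (Jmᵀ * Q⁻¹ * Jm) * g := by rw [hXeq]
      _ = Jmᵀ * Q⁻¹ * Jm := hTQg
      _ = X * Q⁻¹ * X := hXeq.symm
  -- X is symplectic: X = Jᵀ X⁻¹ J
  have hXid : IsUnit X⁻¹.det := isUnit_iff_ne_zero.mpr hX.inv.det_pos.ne'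
  have hXsympl : X = Jmᵀ * X⁻¹ * Jm := by
    have hZ : (Jmᵀ * X⁻¹ * Jm).PosDef := posDef_congr hX.inv hJd
    have hJQJ : Jm * Q⁻¹ * Jmᵀ = Jmᵀ * Q⁻¹ * Jm := by
      rw [hJT]
      simp only [Matrix.mul_neg, Matrix.neg_mul, neg_neg]
    refine riccati_unique hQ hX hZ ?_
    rw [hXeq]
    calc Jmᵀ * Q⁻¹ * Jm
        = Jmᵀ * ((X⁻¹ * X) * Q⁻¹ * (X * X⁻¹)) * Jm := by
          rw [Matrix.nonsing_inv_mul X hXd, Matrix.mul_nonsing_inv X hXd,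
            Matrix.one_mul, Matrix.mul_one]
      _ = Jmᵀ * X⁻¹ * (X * Q⁻¹ * X) * (X⁻¹ * Jm) := by simp only [Matrix.mul_assoc]
      _ = Jmᵀ * X⁻¹ * (Jmᵀ * Q⁻¹ * Jm) * (X⁻¹ * Jm) := by rw [hXeq]
      _ = Jmᵀ * X⁻¹ * (Jm * Q⁻¹ * Jmᵀ) * (X⁻¹ * Jm) := by rw [hJQJ]
      _ = Jmᵀ * X⁻¹ * Jm * Q⁻¹ * (Jmᵀ * X⁻¹ * Jm) := by simp only [Matrix.mul_assoc]
  -- the square root of X is symplectic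
  set S : Matrix (l ⊕ l) (l ⊕ l) ℝ := psqrt hX with hSdef
  have hSS : S * S = X := psqrt_mul_self hX
  have hSpd : S.PosDef := psqrt_posDef hX
  have hSd : IsUnit S.det := isUnit_iff_ne_zero.mpr hSpd.det_pos.ne'
  have hSsymm : Sᵀ = S := psqrt_symm hX
  have hT : (Jmᵀ * S⁻¹ * Jm).PosDef := posDef_congr hSpd.inv hJd
  have hTT : (Jmᵀ * S⁻¹ * Jm) ^ 2 = S ^ 2 := by
    simp only [pow_two]
    calc Jmᵀ * S⁻¹ * Jm * (Jmᵀ * S⁻¹ * Jm)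
        = Jmᵀ * S⁻¹ * (Jm * Jmᵀ) * (S⁻¹ * Jm) := by simp only [Matrix.mul_assoc]
      _ = Jmᵀ * (S⁻¹ * S⁻¹) * Jm := by
          rw [hJJT]
          simp only [Matrix.mul_one, Matrix.mul_assoc]
      _ = Jmᵀ * X⁻¹ * Jm := by
          rw [← Matrix.mul_inv_rev, hSS, Matrix.mul_assoc]
      _ = X := hXsympl.symm
      _ = S * S := hSS.symm
  have hTS : Jmᵀ * S⁻¹ * Jm = S := (CFC.sq_eq_sq_iff _ _ hT.posSemidef.nonneg hSpd.posSemidef.nonneg).mp hTT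
  have hJS : Jm * S = S⁻¹ * Jm := by
    calc Jm * S = Jm * (Jmᵀ * S⁻¹ * Jm) := by rw [hTS]
      _ = (Jm * Jmᵀ) * S⁻¹ * Jm := by simp only [Matrix.mul_assoc]
      _ = S⁻¹ * Jm := by rw [hJJT, Matrix.one_mul]
  have hsymp : Sᵀ * Jm * S = Jm := by
    rw [hSsymm]
    calc S * Jm * S = S * (Jm * S) := by rw [Matrix.mul_assoc]
      _ = S * (S⁻¹ * Jm) := by rw [hJS]
      _ = (S * S⁻¹) * Jm := by rw [Matrix.mul_assoc]
      _ = Jm := by rw [Matrix.mul_nonsing_inv S hSd, Matrix.one_mul]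
  refine ⟨S, hsymp, ?_⟩
  intro g hg
  have hSit : (S⁻¹)ᵀ = S⁻¹ := by rw [Matrix.transpose_nonsing_inv, hSsymm]
  calc (S * g * S⁻¹)ᵀ * (S * g * S⁻¹)
      = (S⁻¹)ᵀ * (gᵀ * Sᵀ) * (S * g * S⁻¹) := by
        simp only [Matrix.transpose_mul, Matrix.mul_assoc]
    _ = S⁻¹ * (gᵀ * (S * S) * g) * S⁻¹ := by
        rw [hSit, hSsymm]; simp only [Matrix.mul_assoc]
    _ = S⁻¹ * (gᵀ * X * g) * S⁻¹ := by rw [hSS]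
    _ = S⁻¹ * X * S⁻¹ := by rw [hXG g hg, Matrix.mul_assoc]
    _ = S⁻¹ * (S * S) * S⁻¹ := by rw [hSS]
    _ = (S⁻¹ * S) * (S * S⁻¹) := by simp only [Matrix.mul_assoc]
    _ = 1 := by rw [Matrix.nonsing_inv_mul S hSd, Matrix.mul_nonsing_inv S hSd, Matrix.one_mul]

end WeylTrick

open Matrix

/-- Every compact subgroup `G` of the real symplectic group
`Sp(2n,ℝ) = {g : gᵀ J g = J}` is conjugate within `Sp(2n,ℝ)` to a subgroup of
the unitary group `Sp(2n,ℝ) ∩ O(2n)`: there is a symplectic matrix `S` with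
`S g S⁻¹` orthogonal for every `g ∈ G`. -/

theorem compact_subgroup_of_symplectic_conjugate_to_unitary (n : ℕ) (hn : 1 ≤ n)
    (G : Set (Matrix (Fin n ⊕ Fin n) (Fin n ⊕ Fin n) ℝ))
    (hsp : ∀ g ∈ G, gᵀ * Matrix.J (Fin n) ℝ * g = Matrix.J (Fin n) ℝ)
    (hcpt : IsCompact G)
    (hone : (1 : Matrix (Fin n ⊕ Fin n) (Fin n ⊕ Fin n) ℝ) ∈ G)
    (hmul : ∀ g ∈ G, ∀ g' ∈ G, g * g' ∈ G)
    (hinv : ∀ g ∈ G, g⁻¹ ∈ G) :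
    ∃ S : Matrix (Fin n ⊕ Fin n) (Fin n ⊕ Fin n) ℝ,
      Sᵀ * Matrix.J (Fin n) ℝ * S = Matrix.J (Fin n) ℝ ∧
      ∀ g ∈ G, (S * g * S⁻¹)ᵀ * (S * g * S⁻¹) = 1 := by
  have hdet : ∀ g ∈ G, IsUnit g.det := by
    intro g hg
    have h1 := congrArg Matrix.det (hsp g hg)
    rw [Matrix.det_mul, Matrix.det_mul, Matrix.det_transpose] at h1
    have hJd : (Matrix.J (Fin n) ℝ).det ≠ 0 := by
      have h2 := Matrix.J_det_mul_J_det (Fin n) ℝ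
      intro h0; rw [h0, zero_mul] at h2; exact zero_ne_one h2
    refine isUnit_iff_ne_zero.mpr fun h0 => hJd ?_
    rw [h0, zero_mul, zero_mul] at h1
    exact h1.symm
  obtain ⟨P, hPpd, hPinv⟩ := WeylTrick.exists_invariant_posDef G hcpt hone hmul hinv hdet
  have hQ : P⁻¹.PosDef := hPpd.inv
  have hQG : ∀ g ∈ G, gᵀ * P⁻¹ * g = P⁻¹ := by
    intro g hg
    have hgd := hdet g hg
    have hgtd : IsUnit gᵀ.det := by rwa [Matrix.det_transpose]
    have h1 := hPinv g hg
    have e : P⁻¹ = (gᵀ)⁻¹ * (P⁻¹ * g⁻¹) := by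
      conv_lhs => rw [← h1]
      rw [Matrix.mul_inv_rev, Matrix.mul_inv_rev]
    calc gᵀ * P⁻¹ * g = gᵀ * ((gᵀ)⁻¹ * (P⁻¹ * g⁻¹)) * g := by
          conv_lhs => rw [e]
      _ = (gᵀ * (gᵀ)⁻¹) * P⁻¹ * (g⁻¹ * g) := by simp only [Matrix.mul_assoc]
      _ = P⁻¹ := by
          rw [Matrix.mul_nonsing_inv gᵀ hgtd, Matrix.nonsing_inv_mul g hgd,
            Matrix.one_mul, Matrix.mul_one]
  exact WeylTrick.exists_symplectic_conj G hsp hdet P⁻¹ hQ hQG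
end

section
/- Let n ≥ 1 and h > 0, and define Φ' : ℂⁿ → ℝ by Φ'(z) = −π‖z‖² + hn/2. Then the set of x ∈ ℝ such that x ∈ hℤ, the level set Φ'⁻¹(x) is nonempty, and the Fréchet derivative of Φ' is nonzero at every point of Φ'⁻¹(x), is exactly {−hN : N ∈ ℤ, 2N > −n}. -/
open Real

/-- The shifted momentum map for the diagonal circle action on `ℂⁿ`:
`Φ'(z) = −π‖z‖² + hn/2`. -/
noncomputable def PhiShifted (n : ℕ) (h : ℝ) (z : EuclideanSpace ℂ (Fin n)) : ℝ :=
  -π * ‖z‖ ^ 2 + h * n / 2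

section Aux

open ComplexConjugate

variable {n : ℕ} {h : ℝ}

/-- The candidate derivative of `PhiShifted` at `z`. -/
noncomputable def PhiDeriv (n : ℕ) (z : EuclideanSpace ℂ (Fin n)) :
    EuclideanSpace ℂ (Fin n) →L[ℝ] ℝ :=
  (-π) • (Complex.reCLM.comp ((fderivInnerCLM ℂ (z, z)).comp
    ((ContinuousLinearMap.id ℝ _).prod (ContinuousLinearMap.id ℝ _))))

lemma hasFDerivAt_PhiShifted (z : EuclideanSpace ℂ (Fin n)) :
    HasFDerivAt (PhiShifted n h) (PhiDeriv n z) z := by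
  have h1 : HasFDerivAt (fun w : EuclideanSpace ℂ (Fin n) => (inner ℂ w w : ℂ))
      ((fderivInnerCLM ℂ (z, z)).comp
        ((ContinuousLinearMap.id ℝ _).prod (ContinuousLinearMap.id ℝ _))) z :=
    (hasFDerivAt_id z).inner ℂ (hasFDerivAt_id z)
  have h2 := (Complex.reCLM.hasFDerivAt.comp z h1).const_mul (-π)
  have h3 := h2.add_const (h * n / 2)
  have heq : (fun w : EuclideanSpace ℂ (Fin n) =>
      -π * (Complex.reCLM ∘ fun w : EuclideanSpace ℂ (Fin n) => (inner ℂ w w : ℂ)) w + h * n / 2)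
      = PhiShifted n h := by
    funext w
    simp only [PhiShifted, Function.comp, Complex.reCLM_apply]
    congr 1
    congr 1
    simpa using inner_self_eq_norm_sq (𝕜 := ℂ) w
  rw [heq] at h3
  exact h3

lemma phiDeriv_apply_self (z : EuclideanSpace ℂ (Fin n)) :
    PhiDeriv n z z = -π * (2 * ‖z‖ ^ 2) := by
  simp only [PhiDeriv, ContinuousLinearMap.smul_apply, ContinuousLinearMap.comp_apply,
    ContinuousLinearMap.prod_apply, ContinuousLinearMap.id_apply, fderivInnerCLM_apply,
    Complex.reCLM_apply, smul_eq_mul]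
  have h4 : (inner ℂ z z : ℂ).re = ‖z‖ ^ 2 := by
    simpa using inner_self_eq_norm_sq (𝕜 := ℂ) z
  rw [Complex.add_re, h4]
  ring

lemma phiDeriv_zero : PhiDeriv n (0 : EuclideanSpace ℂ (Fin n)) = 0 := by
  ext v
  simp [PhiDeriv, fderivInnerCLM_apply]

end Aux

/-- The quantized energy levels of the equivariant metaplectic-c prequantized
system on `ℂⁿ`, i.e. the nonempty regular values of `Φ'(z) = −π‖z‖² + hn/2`
lying in the lattice `hℤ`, are exactly the values `−hN` with `N ∈ ℤ`, `2N > −n`. -/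
theorem quantized_levels_of_shifted_momentum_map (n : ℕ) (hn : 1 ≤ n)
    (h : ℝ) (hh : 0 < h) :
    {x : ℝ | (∃ m : ℤ, x = h * m) ∧ (PhiShifted n h ⁻¹' {x}).Nonempty ∧
        ∀ z ∈ PhiShifted n h ⁻¹' {x}, fderiv ℝ (PhiShifted n h) z ≠ 0}
      = {x : ℝ | ∃ N : ℤ, x = -(h * N) ∧ 2 * N > -(n : ℤ)} := by
  have hπ : (0 : ℝ) < π := Real.pi_pos
  have hfd : ∀ z : EuclideanSpace ℂ (Fin n),
      fderiv ℝ (PhiShifted n h) z = PhiDeriv n z :=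
    fun z => (hasFDerivAt_PhiShifted z).fderiv
  ext x
  simp only [Set.mem_setOf_eq]
  constructor
  · rintro ⟨⟨m, rfl⟩, ⟨z, hz⟩, hreg⟩
    refine ⟨-m, by push_cast; ring, ?_⟩
    -- z is in the preimage and regular, hence z ≠ 0, hence h*m < h*n/2
    have hzne : z ≠ 0 := by
      intro h0
      apply hreg z hz
      rw [hfd, h0, phiDeriv_zero]
    have hznorm : (0 : ℝ) < ‖z‖ ^ 2 := by
      have := norm_pos_iff.mpr hzne
      positivity
    have hzval : PhiShifted n h z = h * m := hz
    have hlt : h * (m : ℝ) < h * n / 2 := by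
      rw [PhiShifted] at hzval
      nlinarith
    have : (m : ℝ) < (n : ℝ) / 2 := by
      rw [mul_div_assoc] at hlt
      exact (mul_lt_mul_iff_right₀ hh).mp hlt
    have h2m : (2 * m : ℤ) < (n : ℤ) := by
      exact_mod_cast (by linarith : (2 * m : ℝ) < (n : ℝ))
    omega
  · rintro ⟨N, rfl, hN⟩
    have hm : -(h * (N : ℝ)) = h * ((-N : ℤ) : ℝ) := by push_cast; ring
    have hlt : -(h * (N : ℝ)) < h * n / 2 := by
      have h2N : (2 * (-N) : ℤ) < (n : ℤ) := by omega
      have : (2 : ℝ) * (-(N : ℝ)) < (n : ℝ) := by exact_mod_cast h2N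
      nlinarith
    have hd : (0 : ℝ) < h * n / 2 - (-(h * N)) := by linarith
    refine ⟨⟨-N, hm⟩, ?_, ?_⟩
    · -- nonempty preimage
      set c : ℝ := Real.sqrt ((h * n / 2 - (-(h * N))) / π)
      have hc : c ^ 2 = (h * n / 2 - (-(h * N))) / π :=
        Real.sq_sqrt (le_of_lt (div_pos hd hπ))
      refine ⟨EuclideanSpace.single ⟨0, hn⟩ (c : ℂ), ?_⟩
      simp only [Set.mem_preimage, Set.mem_singleton_iff, PhiShifted,
        EuclideanSpace.norm_single]
      have : ‖(c : ℂ)‖ ^ 2 = c ^ 2 := by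
        rw [Complex.norm_real, Real.norm_eq_abs, sq_abs]
      rw [this, hc]
      field_simp
      ring
    · intro z hz
      rw [hfd]
      have hzne : -π * ‖z‖ ^ 2 ≠ 0 := by
        have : PhiShifted n h z = -(h * N) := hz
        rw [PhiShifted] at this
        intro h0
        rw [h0] at this
        linarith
      intro h0
      apply hzne
      have := phiDeriv_apply_self z
      rw [h0] at this
      simp only [ContinuousLinearMap.zero_apply] at this
      nlinarith [sq_nonneg ‖z‖]
end
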